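/- arXiv:math/0312439 — 3 statements merged into one kernel-verified Lean document; each statement's English description precedes it below -/
import Mathlib

section
/- In the reduced HNN extension M = N ⋆_D Θ with conditional expectation E_{π(N)}^M : M → π(N), if w = u(θ₀)^{ε₀} π(n₁) u(θ₁)^{ε₁} ⋯ π(n_ℓ) u(θ_ℓ)^{ε_ℓ} is any word such that the corresponding word g = θ₀^{ε₀} θ₁^{ε₁} ⋯ θ_ℓ^{ε_ℓ} in the free group F(Θ) has nonzero word length ℓ(g) ≠ 0, then E_{π(N)}^M(w) = 0. In particular, the stable unitaries u(θ), θ ∈ Θ, form a free family of Haar unitaries with respect to the state φ ∘ E_D^N ∘ π^{-1} ∘ E_{π(N)}^M, so they generate the free group factor L(F(Θ)). -/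
noncomputable section

/-- A faithful conditional expectation onto a star subalgebra. -/
structure CondExp (R : Type*) [Ring R] [StarRing R] [Algebra ℂ R] [StarModule ℂ R]
    (A : StarSubalgebra ℂ R) where
  toFun : R →ₗ[ℂ] R
  mem_range : ∀ x, toFun x ∈ A
  map_of_mem : ∀ a ∈ A, toFun a = a
  bimodule : ∀ a ∈ A, ∀ b ∈ A, ∀ x, toFun (a * x * b) = a * toFun x * b
  map_star' : ∀ x, toFun (star x) = star (toFun x)
  faithful : ∀ x, toFun (star x * x) = 0 → x = 0

namespace HNN

variable {N M Θ : Type*}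

/-- `u(θ)^ε` with `ε` coded by a `Bool` (`true ↦ +1`, `false ↦ -1`). -/
def upow [Monoid M] [StarMul M] (u : Θ → M) (p : Θ × Bool) : M :=
  if p.2 then u p.1 else star (u p.1)

/-- The word `u(θ₀)^{ε₀} π(n₁) u(θ₁)^{ε₁} ⋯ π(n_ℓ) u(θ_ℓ)^{ε_ℓ}`. -/
def wordProd [Monoid M] [StarMul M] (π : N → M) (u : Θ → M)
    (hd : Θ × Bool) (tl : List (N × Θ × Bool)) : M :=
  upow u hd * (tl.map fun x => π x.1 * upow u x.2).prod

/-- Britton's condition on a single adjacent pair of letters. -/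
def StepOK (kerD : Set N) (kerT : Θ → Set N)
    (p : Θ × Bool) (x : N × Θ × Bool) : Prop :=
  p.1 = x.2.1 → p.2 ≠ x.2.2 → (if p.2 then x.1 ∈ kerT p.1 else x.1 ∈ kerD)

/-- A word is reduced iff every adjacent pair satisfies Britton's condition. -/
def ReducedTail (kerD : Set N) (kerT : Θ → Set N) :
    Θ × Bool → List (N × Θ × Bool) → Prop
  | _, [] => True
  | p, x :: xs => StepOK kerD kerT p x ∧ ReducedTail kerD kerT x.2 xs

/-- The image of a word in the free group `F(Θ)` obtained by deleting the `N`-letters. -/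
def fgLetter (p : Θ × Bool) : FreeGroup Θ :=
  if p.2 then FreeGroup.of p.1 else (FreeGroup.of p.1)⁻¹

def fgWord (hd : Θ × Bool) (tl : List (N × Θ × Bool)) : FreeGroup Θ :=
  fgLetter hd * (tl.map fun x => fgLetter x.2).prod

end HNN

namespace HNN

open scoped Classical

variable {N M Θ : Type*}

/-- Number of adjacent pairs violating Britton's condition. -/
noncomputable def badCount (kerD : Set N) (kerT : Θ → Set N) :
    Θ × Bool → List (N × Θ × Bool) → ℕ
  | _, [] => 0
  | p, x :: xs => (if StepOK kerD kerT p x then 0 else 1) + badCount kerD kerT x.2 xs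

/-- The `(Θ, ε)`-datum of the last letter of `p :: l`. -/
def lastθ (p : Θ × Bool) (l : List (N × Θ × Bool)) : Θ × Bool :=
  l.foldl (fun _ x => x.2) p

lemma lastθ_cons (p : Θ × Bool) (x : N × Θ × Bool) (l : List (N × Θ × Bool)) :
    lastθ p (x :: l) = lastθ x.2 l := rfl

lemma lastθ_snoc (p : Θ × Bool) (l : List (N × Θ × Bool)) (a : N × Θ × Bool) :
    lastθ p (l ++ [a]) = a.2 := by
  simp [lastθ, List.foldl_append]

lemma lastθ_eq_cases (p : Θ × Bool) (pre : List (N × Θ × Bool)) :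
    (pre = [] ∧ lastθ p pre = p) ∨ ∃ pre' a, pre = pre' ++ [a] ∧ lastθ p pre = a.2 := by
  induction pre using List.reverseRecOn with
  | nil => exact Or.inl ⟨rfl, rfl⟩
  | append_singleton l a _ => exact Or.inr ⟨l, a, rfl, lastθ_snoc p l a⟩

lemma badCount_nil (kd : Set N) (kt : Θ → Set N) (p : Θ × Bool) :
    badCount kd kt p [] = 0 := rfl

lemma badCount_cons (kd : Set N) (kt : Θ → Set N) (p : Θ × Bool)
    (x : N × Θ × Bool) (xs : List (N × Θ × Bool)) :
    badCount kd kt p (x :: xs)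
      = (if StepOK kd kt p x then 0 else 1) + badCount kd kt x.2 xs := rfl

lemma badCount_append (kd : Set N) (kt : Θ → Set N) (l1 l2 : List (N × Θ × Bool)) :
    ∀ p, badCount kd kt p (l1 ++ l2)
      = badCount kd kt p l1 + badCount kd kt (lastθ p l1) l2 := by
  induction l1 with
  | nil => intro p; simp [badCount, lastθ]
  | cons x xs ih =>
    intro p
    simp only [List.cons_append, badCount_cons, lastθ_cons, ih, add_assoc]

lemma reduced_of_badCount (kd : Set N) (kt : Θ → Set N) :
    ∀ (tl : List (N × Θ × Bool)) p, badCount kd kt p tl = 0 → ReducedTail kd kt p tl := by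
  intro tl
  induction tl with
  | nil => intro p _; trivial
  | cons x xs ih =>
    intro p hp
    rw [badCount_cons] at hp
    have h2 : badCount kd kt x.2 xs = 0 := by omega
    have h1 : (if StepOK kd kt p x then 0 else 1) = 0 := by omega
    refine ⟨?_, ih x.2 h2⟩
    by_contra hS
    rw [if_neg hS] at h1
    exact one_ne_zero h1

lemma exists_first_bad (kd : Set N) (kt : Θ → Set N) :
    ∀ (tl : List (N × Θ × Bool)) p, badCount kd kt p tl ≠ 0 →
      ∃ pre x post, tl = pre ++ x :: post ∧ badCount kd kt p pre = 0 ∧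
        ¬ StepOK kd kt (lastθ p pre) x := by
  intro tl
  induction tl with
  | nil => intro p hp; exact absurd rfl hp
  | cons x xs ih =>
    intro p hp
    by_cases hS : StepOK kd kt p x
    · have h' : badCount kd kt x.2 xs ≠ 0 := by
        intro h0
        apply hp
        rw [badCount_cons, if_pos hS, h0]
      obtain ⟨pre, y, post, h1, h2, h3⟩ := ih x.2 h'
      refine ⟨x :: pre, y, post, by rw [h1, List.cons_append], ?_, ?_⟩
      · rw [badCount_cons, if_pos hS, h2]
      · rwa [lastθ_cons]
    · exact ⟨[], x, xs, rfl, rfl, hS⟩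

end HNN

open HNN in
/-- The characterization of the reduced HNN extension
`(M, E_{π(N)}^M) = (N, E_D^N) ⋆_D (Θ, {E_{θ(D)}^N})`:
the conditions (A) and (M) together with generation. -/
structure IsReducedHNN
    {N : Type*} [NormedRing N] [StarRing N] [CStarRing N] [NormedAlgebra ℂ N] [StarModule ℂ N]
    {M : Type*} [NormedRing M] [StarRing M] [CStarRing M] [NormedAlgebra ℂ M] [StarModule ℂ M]
    {Θ : Type*}
    (D : StarSubalgebra ℂ N) (θ : Θ → (D →⋆ₐ[ℂ] N))
    (ED : CondExp N D) (Eθ : ∀ t : Θ, CondExp N (θ t).range)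
    (π : N →⋆ₐ[ℂ] M) (u : Θ → M) (EM : CondExp M π.range) : Prop where
  π_injective : Function.Injective π
  θ_injective : ∀ t, Function.Injective (θ t)
  u_unitary : ∀ t, u t ∈ unitary M
  /-- Condition (A): `u(θ) π(θ(d)) u(θ)* = π(d)` for all `d ∈ D`. -/
  condA : ∀ t (d : D), u t * π (θ t d) * star (u t) = π (d : N)
  /-- Condition (M): the conditional expectation onto `π(N)` kills every reduced word. -/
  condM : ∀ hd tl,
    ReducedTail {n | ED.toFun n = 0} (fun t => {n | (Eθ t).toFun n = 0}) hd tl →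
      EM.toFun (wordProd (⇑π) u hd tl) = 0
  /-- `π(N)` and the stable unitaries generate `M`. -/
  generates :
    (StarAlgebra.adjoin ℂ (Set.range ⇑π ∪ Set.range u)).topologicalClosure = ⊤

open HNN in
open scoped Classical in
theorem hnn_main_aux
    {N : Type*} [NormedRing N] [StarRing N] [CStarRing N] [NormedAlgebra ℂ N] [StarModule ℂ N]
    {M : Type*} [NormedRing M] [StarRing M] [CStarRing M] [NormedAlgebra ℂ M] [StarModule ℂ M]
    {Θ : Type*}
    {D : StarSubalgebra ℂ N} {θ : Θ → (D →⋆ₐ[ℂ] N)}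
    {ED : CondExp N D} {Eθ : ∀ t : Θ, CondExp N (θ t).range}
    {π : N →⋆ₐ[ℂ] M} {u : Θ → M} {EM : CondExp M π.range}
    (h : IsReducedHNN D θ ED Eθ π u EM) :
    ∀ (L B : ℕ) (hd : Θ × Bool) (tl : List (N × Θ × Bool)), tl.length < L →
      badCount {n | ED.toFun n = 0} (fun t => {n | (Eθ t).toFun n = 0}) hd tl < B →
      fgWord hd tl ≠ 1 → EM.toFun (wordProd (⇑π) u hd tl) = 0 := by
  set kd : Set N := {n | ED.toFun n = 0} with hkd
  set kt : Θ → Set N := fun t => {n | (Eθ t).toFun n = 0} with hkt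
  have hu1 : ∀ t, star (u t) * u t = 1 := fun t => (Unitary.mem_iff.mp (h.u_unitary t)).1
  have hcolpos : ∀ (t : Θ) (d : D), u t * (π (θ t d) * star (u t)) = π (d : N) := by
    intro t d; rw [← mul_assoc]; exact h.condA t d
  have hcolneg : ∀ (t : Θ) (d : D), star (u t) * (π ((d : N)) * u t) = π (θ t d) := by
    intro t d
    calc star (u t) * (π (d : N) * u t)
        = star (u t) * ((u t * π (θ t d) * star (u t)) * u t) := by rw [h.condA t d]
      _ = (star (u t) * u t) * (π (θ t d) * (star (u t) * u t)) := by
          simp only [mul_assoc]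
      _ = π (θ t d) := by rw [hu1 t, one_mul, mul_one]
  intro L
  induction L with
  | zero => exact fun B hd tl h1 => absurd h1 (Nat.not_lt_zero _)
  | succ L ihL =>
    intro B
    induction B with
    | zero => exact fun hd tl _ h2 => absurd h2 (Nat.not_lt_zero _)
    | succ B ihB =>
      intro hd tl hlen hbad hfg
      by_cases h0 : badCount kd kt hd tl = 0
      · exact h.condM hd tl (reduced_of_badCount kd kt tl hd h0)
      obtain ⟨pre, x, post, rfl, hpre0, hSbad⟩ := exists_first_bad kd kt _ hd h0
      obtain ⟨n, t, b⟩ := x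
      -- the previous letter datum is `(t, !b)`
      have hqe : lastθ hd pre = (t, !b) := by
        have hSbad' := hSbad
        unfold StepOK at hSbad'
        push_neg at hSbad'
        obtain ⟨h1, h2, -⟩ := hSbad'
        have hb : (lastθ hd pre).2 = !b := by
          revert h2
          cases hx : (lastθ hd pre).2 <;> cases b <;> simp
        exact Prod.ext_iff.mpr ⟨h1, hb⟩
      -- split the offending letter `n = k + e` with `k` in the kernel and
      -- `e` in the relevant subalgebra, which collapses
      obtain ⟨k, e, m, hn, hkmem, hcol⟩ :
          ∃ k e m, n = k + e ∧ (if (!b : Bool) then k ∈ kt t else k ∈ kd) ∧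
            upow u (t, !b) * (π e * upow u (t, b)) = π m := by
        cases b with
        | false =>
          obtain ⟨d, hdd⟩ := (Eθ t).mem_range n
          refine ⟨n - (Eθ t).toFun n, (Eθ t).toFun n, (d : N), by simp, ?_, ?_⟩
          · show (Eθ t).toFun (n - (Eθ t).toFun n) = 0
            rw [map_sub, (Eθ t).map_of_mem _ ((Eθ t).mem_range n), sub_self]
          · show u t * (π ((Eθ t).toFun n) * star (u t)) = π (d : N)
            rw [← hdd]
            exact hcolpos t d
        | true =>
          refine ⟨n - ED.toFun n, ED.toFun n, θ t ⟨ED.toFun n, ED.mem_range n⟩, by simp, ?_, ?_⟩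
          · show ED.toFun (n - ED.toFun n) = 0
            rw [map_sub, ED.map_of_mem _ (ED.mem_range n), sub_self]
          · exact hcolneg t ⟨ED.toFun n, ED.mem_range n⟩
      have hcolX : ∀ X : M, upow u (t, !b) * (π e * (upow u (t, b) * X)) = π m * X := by
        intro X; rw [← hcol]; simp only [mul_assoc]
      -- additive splitting of the word
      have hsum : wordProd (⇑π) u hd (pre ++ (n, t, b) :: post) =
          wordProd (⇑π) u hd (pre ++ (k, t, b) :: post) +
          wordProd (⇑π) u hd (pre ++ (e, t, b) :: post) := by
        simp only [wordProd, List.map_append, List.map_cons, List.prod_append, List.prod_cons]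
        rw [hn, map_add]
        noncomm_ring
      rw [hsum, map_add]
      -- the kernel part vanishes by the inner induction (fewer bad pairs)
      have hker : EM.toFun (wordProd (⇑π) u hd (pre ++ (k, t, b) :: post)) = 0 := by
        apply ihB
        · simpa using hlen
        · have hSok : StepOK kd kt (lastθ hd pre) (k, t, b) := by
            rw [hqe]
            intro _ _
            exact hkmem
          rw [badCount_append, badCount_cons, hpre0, if_pos hSok]
          rw [badCount_append, badCount_cons, hpre0, if_neg hSbad] at hbad
          have e1 : badCount kd kt ((n, t, b) : N × Θ × Bool).2 post
              = badCount kd kt ((k, t, b) : N × Θ × Bool).2 post := rfl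
          rw [e1] at hbad
          omega
        · intro hcontr
          apply hfg
          rw [fgWord, List.map_append] at hcontr ⊢
          exact hcontr
      rw [hker, zero_add]
      -- the collapsed part vanishes by the outer induction (shorter word)
      rcases lastθ_eq_cases hd pre with ⟨rfl, -⟩ | ⟨pre', a, rfl, hqa⟩
      · -- the bad pair involves the head letter
        have hdeq : hd = (t, !b) := hqe
        subst hdeq
        cases post with
        | nil =>
          -- impossible : the whole word would have trivial free group image
          exfalso
          apply hfg
          cases b <;> simp [fgWord, fgLetter]
        | cons c post' =>
          have hw : wordProd (⇑π) u (t, !b) ([] ++ (e, t, b) :: c :: post') =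
              π (m * c.1) * wordProd (⇑π) u c.2 post' := by
            simp only [wordProd, List.nil_append, List.map_cons, List.prod_cons, map_mul,
              mul_assoc, hcolX]
          rw [hw]
          have hbi := EM.bimodule (π (m * c.1)) ⟨m * c.1, rfl⟩ 1 (one_mem _)
            (wordProd (⇑π) u c.2 post')
          rw [mul_one, mul_one] at hbi
          rw [hbi]
          have hW : EM.toFun (wordProd (⇑π) u c.2 post') = 0 := by
            apply ihL (badCount kd kt c.2 post' + 1) c.2 post' ?_ (Nat.lt_succ_self _)
            · intro hcontr
              apply hfg
              rw [← hcontr]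
              cases b <;> simp [fgWord, fgLetter, mul_assoc]
            · simp only [List.nil_append, List.length_cons] at hlen ⊢
              omega
          rw [hW, mul_zero]
      · -- the bad pair is interior; the previous letter is `a`
        obtain ⟨a1, a2⟩ := a
        have ha2 : a2 = (t, !b) := hqa.symm.trans hqe
        subst ha2
        cases post with
        | nil =>
          have hw : wordProd (⇑π) u hd ((pre' ++ [(a1, t, !b)]) ++ (e, t, b) :: []) =
              wordProd (⇑π) u hd pre' * π (a1 * m) := by
            simp only [wordProd, List.append_assoc, List.cons_append, List.nil_append,
              List.map_append, List.map_cons, List.map_nil, List.prod_append, List.prod_cons,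
              List.prod_nil, map_mul, mul_one, mul_assoc, hcol, hcolX]
          rw [hw]
          have hbi := EM.bimodule 1 (one_mem _) (π (a1 * m)) ⟨a1 * m, rfl⟩
            (wordProd (⇑π) u hd pre')
          rw [one_mul, one_mul] at hbi
          rw [hbi]
          have hW : EM.toFun (wordProd (⇑π) u hd pre') = 0 := by
            apply ihL (badCount kd kt hd pre' + 1) hd pre' ?_ (Nat.lt_succ_self _)
            · intro hcontr
              apply hfg
              rw [← hcontr]
              cases b <;> simp [fgWord, fgLetter, mul_assoc]
            · simp only [List.length_append, List.length_cons, List.length_nil] at hlen ⊢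
              omega
          rw [hW, zero_mul]
        | cons c post' =>
          have hw : wordProd (⇑π) u hd ((pre' ++ [(a1, t, !b)]) ++ (e, t, b) :: c :: post') =
              wordProd (⇑π) u hd (pre' ++ (a1 * m * c.1, c.2) :: post') := by
            simp only [wordProd, List.append_assoc, List.cons_append, List.nil_append,
              List.map_append, List.map_cons, List.map_nil, List.prod_append, List.prod_cons,
              List.prod_nil, map_mul, mul_one, mul_assoc, hcol, hcolX]
          rw [hw]
          apply ihL (badCount kd kt hd (pre' ++ (a1 * m * c.1, c.2) :: post') + 1) hd _
            ?_ (Nat.lt_succ_self _)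
          · intro hcontr
            apply hfg
            rw [← hcontr]
            cases b <;> simp [fgWord, fgLetter, mul_assoc]
          · simp only [List.length_append, List.length_cons, List.length_nil] at hlen ⊢
            omega

open HNN in
/-- In the reduced HNN extension `M = N ⋆_D Θ`, any word whose image in the free
group `F(Θ)` (obtained by deleting the `N`-letters) has nonzero length is killed by
`E_{π(N)}^M`.  In particular the stable unitaries `u(θ)` form a free family of Haar unitaries
with respect to the state `φ ∘ E_D^N ∘ π⁻¹ ∘ E_{π(N)}^M` (expressed by the vanishing of the
moments `ψ(u(g))` for every `g ≠ 1` in `F(Θ)`), so that they generate the free group factor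
`L(F(Θ))`. -/
theorem hnn_expectation_vanishes_on_positive_length_words
    {N : Type*} [NormedRing N] [StarRing N] [CStarRing N] [NormedAlgebra ℂ N] [StarModule ℂ N]
    {M : Type*} [NormedRing M] [StarRing M] [CStarRing M] [NormedAlgebra ℂ M] [StarModule ℂ M]
    {Θ : Type*}
    (D : StarSubalgebra ℂ N) (θ : Θ → (D →⋆ₐ[ℂ] N))
    (ED : CondExp N D) (Eθ : ∀ t : Θ, CondExp N (θ t).range)
    (π : N →⋆ₐ[ℂ] M) (u : Θ → M) (EM : CondExp M π.range)
    (h : IsReducedHNN D θ ED Eθ π u EM)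
    -- a faithful normal state of the form `φ ∘ E_D^N` on `N` ...
    (φ : N →ₗ[ℂ] ℂ) (hφ1 : φ 1 = 1) (hφE : ∀ x, φ (ED.toFun x) = φ x)
    (hφfaithful : ∀ x, φ (star x * x) = 0 → x = 0)
    -- ... and its extension `ψ = φ ∘ E_D^N ∘ π⁻¹ ∘ E_{π(N)}^M` to `M`
    (ψ : M →ₗ[ℂ] ℂ) (hψπ : ∀ x : N, ψ (π x) = φ x) (hψE : ∀ m, ψ (EM.toFun m) = ψ m) :
    (∀ (hd : Θ × Bool) (tl : List (N × Θ × Bool)),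
      fgWord hd tl ≠ 1 → EM.toFun (wordProd (⇑π) u hd tl) = 0) ∧
    (∀ g : FreeGroup Θ, g ≠ 1 →
      ψ ((FreeGroup.lift (fun t => (⟨u t, h.u_unitary t⟩ : unitary M)) g : unitary M) : M) = 0) := by
  classical
  have part1 : ∀ (hd : Θ × Bool) (tl : List (N × Θ × Bool)),
      fgWord hd tl ≠ 1 → EM.toFun (wordProd (⇑π) u hd tl) = 0 := by
    intro hd tl hfg
    exact hnn_main_aux h (tl.length + 1)
      (badCount {n | ED.toFun n = 0} (fun t => {n | (Eθ t).toFun n = 0}) hd tl + 1) hd tl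
      (Nat.lt_succ_self _) (Nat.lt_succ_self _) hfg
  refine ⟨part1, ?_⟩
  intro g hg
  have hLne : g.toWord ≠ [] := fun hnil => hg (FreeGroup.toWord_eq_nil_iff.mp hnil)
  obtain ⟨hd0, rest, hrest⟩ : ∃ a l, g.toWord = a :: l := by
    cases hc : g.toWord with
    | nil => exact absurd hc hLne
    | cons a l => exact ⟨a, l, rfl⟩
  set tl : List (N × Θ × Bool) := rest.map fun p => ((1 : N), p) with htl
  have hfgletter : (fgLetter : Θ × Bool → FreeGroup Θ)
      = fun x => cond x.2 (FreeGroup.of x.1) (FreeGroup.of x.1)⁻¹ := by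
    funext x
    rcases x with ⟨s, _ | _⟩ <;> rfl
  have hmk : ∀ Lw : List (Θ × Bool), (Lw.map fgLetter).prod = FreeGroup.mk Lw := by
    intro Lw
    have h2 : FreeGroup.lift FreeGroup.of (FreeGroup.mk Lw) = FreeGroup.mk Lw := by
      rw [FreeGroup.lift_of_eq_id]; rfl
    rw [← h2, FreeGroup.lift_mk, hfgletter]
  have hfg : fgWord hd0 tl = g := by
    have h1 : fgWord hd0 tl = ((hd0 :: rest).map fgLetter).prod := by
      simp [fgWord, htl, List.map_map, Function.comp_def]
    rw [h1, hmk, ← hrest, FreeGroup.mk_toWord]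
  have hco : ∀ x : Θ × Bool,
      ((cond x.2 (⟨u x.1, h.u_unitary x.1⟩ : unitary M)
        (⟨u x.1, h.u_unitary x.1⟩ : unitary M)⁻¹ : unitary M) : M) = upow u x := by
    rintro ⟨s, _ | _⟩ <;> rfl
  have hlift : ((FreeGroup.lift (fun t => (⟨u t, h.u_unitary t⟩ : unitary M)) g
      : unitary M) : M) = wordProd (⇑π) u hd0 tl := by
    conv_lhs => rw [← FreeGroup.mk_toWord (x := g)]
    rw [FreeGroup.lift_mk, SubmonoidClass.coe_list_prod, List.map_map, hrest]
    simp only [List.map_cons, List.prod_cons, Function.comp_def, hco]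
    simp [wordProd, htl, List.map_map, Function.comp_def]
  have hW : EM.toFun (wordProd (⇑π) u hd0 tl) = 0 :=
    part1 hd0 tl (by rw [hfg]; exact hg)
  rw [hlift, ← hψE, hW, map_zero]
end
end

section
/- The conditions (A) and (M) characterize the reduced HNN extension: if P is a von Neumann algebra containing a copy of N (via a normal *-isomorphism) and unitaries v(θ), θ ∈ Θ, generating P, together with a faithful normal conditional expectation F : P → N such that v(θ)θ(d)v(θ)* = d for all d ∈ D and F(w) = 0 for every reduced word w, then the value of F on any word u(θ₀)^{δ₀} x₁ u(θ₁)^{δ₁} ⋯ x_m u(θ_m)^{δ_m} (x_i ∈ N, δ_i ∈ ℤ∖{0}) is uniquely determined by the data (θ_i, δ_i), x_i, E_D^N, and the E_{θ(D)}^N. -/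
noncomputable section

namespace HNN

/-- The word `u(θ₀)^{δ₀} π(x₁) u(θ₁)^{δ₁} ⋯ π(x_m) u(θ_m)^{δ_m}` with integer exponents. -/
def zwordProd {N M Θ : Type*} [Monoid M] [StarMul M] (π : N → M) (u : Θ → unitary M)
    (hd : Θ × ℤ) (tl : List (N × Θ × ℤ)) : M :=
  ((u hd.1 ^ hd.2 : unitary M) : M) *
    (tl.map fun x => π x.1 * ((u x.2.1 ^ x.2.2 : unitary M) : M)).prod

end HNN

namespace HNNAux
open HNN

theorem upow_true {M Θ : Type*} [Monoid M] [StarMul M] (u : Θ → M) (t : Θ) :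
    upow u (t, true) = u t := rfl

theorem upow_false {M Θ : Type*} [Monoid M] [StarMul M] (u : Θ → M) (t : Θ) :
    upow u (t, false) = star (u t) := rfl

theorem wordProd_nil {N M Θ : Type*} [Monoid M] [StarMul M] (π : N → M) (u : Θ → M)
    (hd : Θ × Bool) : wordProd π u hd [] = upow u hd := by
  simp [wordProd]

theorem wordProd_concat {N M Θ : Type*} [Monoid M] [StarMul M] (π : N → M) (u : Θ → M)
    (hd : Θ × Bool) (tl : List (N × Θ × Bool)) (y : N × Θ × Bool) :
    wordProd π u hd (tl ++ [y]) = wordProd π u hd tl * (π y.1 * upow u y.2) := by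
  simp [wordProd, mul_assoc]

/-- The `(Θ, ±1)`-datum of the last letter of the word `(hd, tl)`. -/
def lastP {N Θ : Type*} (hd : Θ × Bool) (tl : List (N × Θ × Bool)) : Θ × Bool :=
  tl.foldl (fun _ x => x.2) hd

theorem lastP_nil {N Θ : Type*} (hd : Θ × Bool) : lastP (N := N) hd [] = hd := rfl

theorem lastP_cons {N Θ : Type*} (hd : Θ × Bool) (x : N × Θ × Bool)
    (xs : List (N × Θ × Bool)) : lastP hd (x :: xs) = lastP x.2 xs := rfl

theorem lastP_concat {N Θ : Type*} (hd : Θ × Bool) (tl : List (N × Θ × Bool))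
    (y : N × Θ × Bool) : lastP hd (tl ++ [y]) = y.2 := by
  simp [lastP, List.foldl_append]

theorem reduced_concat {N Θ : Type*} (kD : Set N) (kT : Θ → Set N) (tl : List (N × Θ × Bool))
    (hd : Θ × Bool) (y : N × Θ × Bool) :
    ReducedTail kD kT hd (tl ++ [y]) ↔
      ReducedTail kD kT hd tl ∧ StepOK kD kT (lastP hd tl) y := by
  induction tl generalizing hd with
  | nil =>
      show (StepOK kD kT hd y ∧ True) ↔ (True ∧ _)
      rw [lastP_nil]; tauto
  | cons x xs ih =>
      rw [List.cons_append]
      show (StepOK kD kT hd x ∧ ReducedTail kD kT x.2 (xs ++ [y])) ↔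
        ((StepOK kD kT hd x ∧ ReducedTail kD kT x.2 xs) ∧ _)
      rw [ih, lastP_cons]
      tauto

section Main

variable {N : Type*} [NormedRing N] [StarRing N] [CStarRing N] [NormedAlgebra ℂ N]
  [StarModule ℂ N]
variable {M : Type*} [NormedRing M] [StarRing M] [CStarRing M] [NormedAlgebra ℂ M]
  [StarModule ℂ M]
variable {Θ : Type*}
variable (D : StarSubalgebra ℂ N) (θ : Θ → (D →⋆ₐ[ℂ] N))
variable (ED : CondExp N D) (Eθ : ∀ t : Θ, CondExp N (θ t).range)
variable (π : N →⋆ₐ[ℂ] M) (u : Θ → M)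

/-- The kernel of `E_D^N`. -/
def kD : Set N := {n | ED.toFun n = 0}

/-- The kernels of the `E_{θ(D)}^N`. -/
def kT : Θ → Set N := fun t => {n | (Eθ t).toFun n = 0}

/-- The generating set: `π(N)` together with all `π(a) ⬝ (reduced word) ⬝ π(b)`. -/
def TSet : Set M :=
  Set.range ⇑π ∪ {x | ∃ a hd tl b, ReducedTail (kD D ED) (kT D θ Eθ) hd tl ∧
    x = π a * wordProd (⇑π) u hd tl * π b}

/-- The linear span of `TSet`. -/
def SSub : Submodule ℂ M := Submodule.span ℂ (TSet D θ ED Eθ π u)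

variable {D θ ED Eθ π u}
variable {F : CondExp M π.range} (h : IsReducedHNN D θ ED Eθ π u F)

include h

theorem collapse_neg (t : Θ) (d : D) : star (u t) * π (d : N) * u t = π (θ t d) := by
  obtain ⟨hsu, hus⟩ := (Unitary.mem_iff).1 (h.u_unitary t)
  have hA := h.condA t d
  calc star (u t) * π (d : N) * u t
      = star (u t) * (u t * π (θ t d) * star (u t)) * u t := by rw [hA]
    _ = (star (u t) * u t) * (π (θ t d) * (star (u t) * u t)) := by
        simp only [mul_assoc]
    _ = π (θ t d) := by rw [hsu, one_mul, mul_one]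

theorem collapseA (t : Θ) (e : N) (d : D) (hde : θ t d = e) :
    u t * (π e * star (u t)) = π (d : N) := by
  rw [← hde, ← mul_assoc]; exact h.condA t d

theorem collapseB (t : Θ) (e : N) (he : e ∈ D) :
    star (u t) * (π e * u t) = π (θ t ⟨e, he⟩) := by
  rw [← mul_assoc]; exact collapse_neg h t ⟨e, he⟩

theorem TSet_mul_pi {x : M} (hx : x ∈ TSet D θ ED Eθ π u) (n : N) :
    x * π n ∈ TSet D θ ED Eθ π u := by
  rcases hx with ⟨c, rfl⟩ | ⟨a, hd, tl, b, hred, rfl⟩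
  · exact Or.inl ⟨c * n, by simp [map_mul]⟩
  · exact Or.inr ⟨a, hd, tl, b * n, hred, by simp [map_mul, mul_assoc]⟩

theorem S_mul_pi {s : M} (hs : s ∈ SSub D θ ED Eθ π u) (n : N) :
    s * π n ∈ SSub D θ ED Eθ π u := by
  induction hs using Submodule.span_induction with
  | mem x hx => exact Submodule.subset_span (TSet_mul_pi h hx n)
  | zero => simpa using (SSub D θ ED Eθ π u).zero_mem
  | add x y _ _ hx hy => simpa [add_mul] using (SSub D θ ED Eθ π u).add_mem hx hy
  | smul c x _ hx => simpa [smul_mul_assoc] using (SSub D θ ED Eθ π u).smul_mem c hx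

theorem TSet_mul_upow {x : M} (hx : x ∈ TSet D θ ED Eθ π u) (t : Θ) (ε : Bool) :
    x * upow u (t, ε) ∈ SSub D θ ED Eθ π u := by
  rcases hx with ⟨c, rfl⟩ | ⟨a, hd, tl, b, hred, rfl⟩
  · refine Submodule.subset_span (Or.inr ⟨c, (t, ε), [], 1, trivial, ?_⟩)
    simp [wordProd_nil]
  · by_cases hok : StepOK (kD D ED) (kT D θ Eθ) (lastP hd tl) (b, t, ε)
    · refine Submodule.subset_span (Or.inr ⟨a, hd, tl ++ [(b, t, ε)], 1, ?_, ?_⟩)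
      · exact (reduced_concat _ _ _ _ _).2 ⟨hred, hok⟩
      · rw [wordProd_concat]; simp [mul_assoc]
    · rw [StepOK] at hok
      push_neg at hok
      obtain ⟨hpt, hpe, -⟩ := hok
      simp only at hpt hpe
      subst hpt
      have hε : ε = !(lastP hd tl).2 := by
        rcases Bool.eq_false_or_eq_true (lastP hd tl).2 with hp2 | hp2 <;>
          rw [hp2] at hpe ⊢ <;> cases ε <;> simp_all
      subst hε
      rcases Bool.eq_false_or_eq_true (lastP hd tl).2 with hp2 | hp2
      · -- trailing exponent is +1, next is -1 : use `E_{θ(q)}`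
        obtain ⟨d, hde⟩ := (Eθ (lastP hd tl).1).mem_range b
        have hker : b - (Eθ (lastP hd tl).1).toFun b ∈ kT D θ Eθ (lastP hd tl).1 := by
          show (Eθ (lastP hd tl).1).toFun (b - (Eθ (lastP hd tl).1).toFun b) = 0
          rw [map_sub, (Eθ (lastP hd tl).1).map_of_mem _ ((Eθ (lastP hd tl).1).mem_range b),
            sub_self]
        have hsplit : π b = π (b - (Eθ (lastP hd tl).1).toFun b) +
            π ((Eθ (lastP hd tl).1).toFun b) := by
          rw [← map_add, sub_add_cancel]
        rw [show π a * wordProd (⇑π) u hd tl * π b *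
              upow u ((lastP hd tl).1, !(lastP hd tl).2)
            = π a * wordProd (⇑π) u hd tl * π (b - (Eθ (lastP hd tl).1).toFun b) *
                upow u ((lastP hd tl).1, !(lastP hd tl).2)
              + π a * wordProd (⇑π) u hd tl * π ((Eθ (lastP hd tl).1).toFun b) *
                upow u ((lastP hd tl).1, !(lastP hd tl).2) from by
          rw [hsplit, mul_add, add_mul]]
        refine (SSub D θ ED Eθ π u).add_mem ?_ ?_
        · refine Submodule.subset_span
            (Or.inr ⟨a, hd, tl ++ [(b - (Eθ (lastP hd tl).1).toFun b, (lastP hd tl).1,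
              !(lastP hd tl).2)], 1, ?_, ?_⟩)
          · refine (reduced_concat _ _ _ _ _).2 ⟨hred, ?_⟩
            intro _ _
            rw [hp2]
            simpa using hker
          · rw [wordProd_concat]; simp [mul_assoc]
        · rcases List.eq_nil_or_concat tl with rfl | ⟨tl', y, htl⟩
          · have hq : lastP (N := N) hd [] = hd := rfl
            rw [hq] at hp2 hde ⊢
            refine Submodule.subset_span (Or.inl ⟨a * (d : N), .symm ?_⟩)
            rw [wordProd_nil]
            have hup : upow u hd = u hd.1 := by simp [upow, hp2]
            rw [hup, hp2, Bool.not_true, upow_false, map_mul]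
            calc π a * u hd.1 * π ((Eθ hd.1).toFun b) * star (u hd.1)
                = π a * (u hd.1 * (π ((Eθ hd.1).toFun b) * star (u hd.1))) := by
                  simp only [mul_assoc]
              _ = π a * π (d : N) := by rw [collapseA h hd.1 _ d hde]
          · rw [List.concat_eq_append] at htl
            subst htl
            have hq : lastP hd (tl' ++ [y]) = y.2 := lastP_concat _ _ _
            rw [hq] at hp2 hde ⊢
            have hred' : ReducedTail (kD D ED) (kT D θ Eθ) hd tl' :=
              ((reduced_concat _ _ _ _ _).1 hred).1
            refine Submodule.subset_span
              (Or.inr ⟨a, hd, tl', y.1 * (d : N), hred', ?_⟩)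
            rw [wordProd_concat]
            have hup : upow u y.2 = u y.2.1 := by
              have hy : y.2 = (y.2.1, true) := by rw [← hp2]
              rw [hy]; rfl
            rw [hup, hp2, Bool.not_true, upow_false, map_mul]
            calc π a * (wordProd (⇑π) u hd tl' * (π y.1 * u y.2.1)) *
                  π ((Eθ y.2.1).toFun b) * star (u y.2.1)
                = π a * (wordProd (⇑π) u hd tl' * (π y.1 *
                    (u y.2.1 * (π ((Eθ y.2.1).toFun b) * star (u y.2.1))))) := by
                  simp only [mul_assoc]
              _ = π a * (wordProd (⇑π) u hd tl' * (π y.1 * π (d : N))) := by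
                  rw [collapseA h y.2.1 _ d hde]
              _ = π a * wordProd (⇑π) u hd tl' * (π y.1 * π (d : N)) := by
                  simp only [mul_assoc]
      · -- trailing exponent is -1, next is +1 : use `E_D`
        have hmem : ED.toFun b ∈ D := ED.mem_range b
        have hker : b - ED.toFun b ∈ kD D ED := by
          show ED.toFun (b - ED.toFun b) = 0
          rw [map_sub, ED.map_of_mem _ hmem, sub_self]
        have hsplit : π b = π (b - ED.toFun b) + π (ED.toFun b) := by
          rw [← map_add, sub_add_cancel]
        rw [show π a * wordProd (⇑π) u hd tl * π b *
              upow u ((lastP hd tl).1, !(lastP hd tl).2)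
            = π a * wordProd (⇑π) u hd tl * π (b - ED.toFun b) *
                upow u ((lastP hd tl).1, !(lastP hd tl).2)
              + π a * wordProd (⇑π) u hd tl * π (ED.toFun b) *
                upow u ((lastP hd tl).1, !(lastP hd tl).2) from by
          rw [hsplit, mul_add, add_mul]]
        refine (SSub D θ ED Eθ π u).add_mem ?_ ?_
        · refine Submodule.subset_span
            (Or.inr ⟨a, hd, tl ++ [(b - ED.toFun b, (lastP hd tl).1, !(lastP hd tl).2)],
              1, ?_, ?_⟩)
          · refine (reduced_concat _ _ _ _ _).2 ⟨hred, ?_⟩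
            intro _ _
            rw [hp2]
            simpa using hker
          · rw [wordProd_concat]; simp [mul_assoc]
        · rcases List.eq_nil_or_concat tl with rfl | ⟨tl', y, htl⟩
          · have hq : lastP (N := N) hd [] = hd := rfl
            rw [hq] at hp2 ⊢
            refine Submodule.subset_span
              (Or.inl ⟨a * ((θ hd.1) ⟨ED.toFun b, hmem⟩ : N), .symm ?_⟩)
            rw [wordProd_nil]
            have hup : upow u hd = star (u hd.1) := by simp [upow, hp2]
            rw [hup, hp2, Bool.not_false, upow_true, map_mul]
            calc π a * star (u hd.1) * π (ED.toFun b) * u hd.1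
                = π a * (star (u hd.1) * (π (ED.toFun b) * u hd.1)) := by
                  simp only [mul_assoc]
              _ = π a * π ((θ hd.1) ⟨ED.toFun b, hmem⟩ : N) := by rw [collapseB h]
          · rw [List.concat_eq_append] at htl
            subst htl
            have hq : lastP hd (tl' ++ [y]) = y.2 := lastP_concat _ _ _
            rw [hq] at hp2 ⊢
            have hred' : ReducedTail (kD D ED) (kT D θ Eθ) hd tl' :=
              ((reduced_concat _ _ _ _ _).1 hred).1
            refine Submodule.subset_span
              (Or.inr ⟨a, hd, tl', y.1 * ((θ y.2.1) ⟨ED.toFun b, hmem⟩ : N), hred', ?_⟩)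
            rw [wordProd_concat]
            have hup : upow u y.2 = star (u y.2.1) := by
              have hy : y.2 = (y.2.1, false) := by rw [← hp2]
              rw [hy]; rfl
            rw [hup, hp2, Bool.not_false, upow_true, map_mul]
            calc π a * (wordProd (⇑π) u hd tl' * (π y.1 * star (u y.2.1))) *
                  π (ED.toFun b) * u y.2.1
                = π a * (wordProd (⇑π) u hd tl' * (π y.1 *
                    (star (u y.2.1) * (π (ED.toFun b) * u y.2.1)))) := by
                  simp only [mul_assoc]
              _ = π a * (wordProd (⇑π) u hd tl' *
                    (π y.1 * π ((θ y.2.1) ⟨ED.toFun b, hmem⟩ : N))) := by rw [collapseB h]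
              _ = π a * wordProd (⇑π) u hd tl' *
                    (π y.1 * π ((θ y.2.1) ⟨ED.toFun b, hmem⟩ : N)) := by
                  simp only [mul_assoc]

theorem S_mul_upow {s : M} (hs : s ∈ SSub D θ ED Eθ π u) (t : Θ) (ε : Bool) :
    s * upow u (t, ε) ∈ SSub D θ ED Eθ π u := by
  induction hs using Submodule.span_induction with
  | mem x hx => exact TSet_mul_upow h hx t ε
  | zero => simpa using (SSub D θ ED Eθ π u).zero_mem
  | add x y _ _ hx hy => simpa [add_mul] using (SSub D θ ED Eθ π u).add_mem hx hy
  | smul c x _ hx => simpa [smul_mul_assoc] using (SSub D θ ED Eθ π u).smul_mem c hx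

theorem S_mul_zpow (t : Θ) (δ : ℤ) {s : M} (hs : s ∈ SSub D θ ED Eθ π u) :
    s * (((⟨u t, h.u_unitary t⟩ : unitary M) ^ δ : unitary M) : M) ∈ SSub D θ ED Eθ π u := by
  induction δ using Int.induction_on with
  | zero => simpa using hs
  | succ k ih =>
      have : s * (((⟨u t, h.u_unitary t⟩ : unitary M) ^ ((k : ℤ) + 1) : unitary M) : M)
          = (s * (((⟨u t, h.u_unitary t⟩ : unitary M) ^ (k : ℤ) : unitary M) : M))
            * upow u (t, true) := by
        rw [zpow_add_one, MulMemClass.coe_mul, ← mul_assoc]; rfl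
      rw [this]
      exact S_mul_upow h ih t true
  | pred k ih =>
      have : s * (((⟨u t, h.u_unitary t⟩ : unitary M) ^ (-(k : ℤ) - 1) : unitary M) : M)
          = (s * (((⟨u t, h.u_unitary t⟩ : unitary M) ^ (-(k : ℤ)) : unitary M) : M))
            * upow u (t, false) := by
        rw [zpow_sub_one, MulMemClass.coe_mul, ← mul_assoc, ← Unitary.star_eq_inv]; rfl
      rw [this]
      exact S_mul_upow h ih t false

theorem zword_cons (hd : Θ × ℤ) (x : N × Θ × ℤ) (xs : List (N × Θ × ℤ)) :
    zwordProd (⇑π) (fun t => (⟨u t, h.u_unitary t⟩ : unitary M)) hd (x :: xs)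
      = (((⟨u hd.1, h.u_unitary hd.1⟩ : unitary M) ^ hd.2 : unitary M) : M) *
        (π x.1 * zwordProd (⇑π) (fun t => (⟨u t, h.u_unitary t⟩ : unitary M)) x.2 xs) := by
  simp [zwordProd, mul_assoc]

theorem S_mul_zword :
    ∀ (tl : List (N × Θ × ℤ)) (hd : Θ × ℤ) (s : M), s ∈ SSub D θ ED Eθ π u →
      s * zwordProd (⇑π) (fun t => (⟨u t, h.u_unitary t⟩ : unitary M)) hd tl
        ∈ SSub D θ ED Eθ π u := by
  intro tl
  induction tl with
  | nil =>
      intro hd s hs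
      have : zwordProd (⇑π) (fun t => (⟨u t, h.u_unitary t⟩ : unitary M)) hd []
          = (((⟨u hd.1, h.u_unitary hd.1⟩ : unitary M) ^ hd.2 : unitary M) : M) := by
        simp [zwordProd]
      rw [this]
      exact S_mul_zpow h hd.1 hd.2 hs
  | cons x xs ih =>
      intro hd s hs
      rw [zword_cons h, ← mul_assoc, ← mul_assoc]
      exact ih x.2 _ (S_mul_pi h (S_mul_zpow h hd.1 hd.2 hs) x.1)

omit h

theorem F_eq_on_S {F₁ F₂ : CondExp M π.range}
    (h₁ : IsReducedHNN D θ ED Eθ π u F₁) (h₂ : IsReducedHNN D θ ED Eθ π u F₂)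
    {s : M} (hs : s ∈ SSub D θ ED Eθ π u) : F₁.toFun s = F₂.toFun s := by
  induction hs using Submodule.span_induction with
  | mem x hx =>
      rcases hx with ⟨c, rfl⟩ | ⟨a, hd, tl, b, hred, rfl⟩
      · rw [F₁.map_of_mem (π c) ⟨c, rfl⟩, F₂.map_of_mem (π c) ⟨c, rfl⟩]
      · rw [F₁.bimodule (π a) ⟨a, rfl⟩ (π b) ⟨b, rfl⟩ (wordProd (⇑π) u hd tl),
          F₂.bimodule (π a) ⟨a, rfl⟩ (π b) ⟨b, rfl⟩ (wordProd (⇑π) u hd tl),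
          h₁.condM hd tl hred, h₂.condM hd tl hred]
  | zero => simp
  | add x y _ _ hx hy => simp [map_add, hx, hy]
  | smul c x _ hx => simp [map_smul, hx]

end Main
end HNNAux

open HNN in
/-- The conditions (A) and (M) characterize the reduced HNN extension: any two
faithful (normal) conditional expectations `F₁`, `F₂` onto `π(N)` satisfying (A) and (M) (i.e.
two realizations of the reduced HNN extension on the same generators) agree on every word
`u(θ₀)^{δ₀} x₁ u(θ₁)^{δ₁} ⋯ x_m u(θ_m)^{δ_m}` with `x_i ∈ N` and `δ_i ∈ ℤ ∖ {0}`: the value of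
the conditional expectation on such a word is uniquely determined by the data `(θ_i, δ_i)`,
`x_i`, `E_D^N` and the `E_{θ(D)}^N`. -/
theorem hnn_expectation_uniquely_determined
    {N : Type*} [NormedRing N] [StarRing N] [CStarRing N] [NormedAlgebra ℂ N] [StarModule ℂ N]
    {M : Type*} [NormedRing M] [StarRing M] [CStarRing M] [NormedAlgebra ℂ M] [StarModule ℂ M]
    {Θ : Type*}
    (D : StarSubalgebra ℂ N) (θ : Θ → (D →⋆ₐ[ℂ] N))
    (ED : CondExp N D) (Eθ : ∀ t : Θ, CondExp N (θ t).range)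
    (π : N →⋆ₐ[ℂ] M) (u : Θ → M)
    (F₁ F₂ : CondExp M π.range)
    (h₁ : IsReducedHNN D θ ED Eθ π u F₁)
    (h₂ : IsReducedHNN D θ ED Eθ π u F₂) :
    ∀ (hd : Θ × ℤ) (tl : List (N × Θ × ℤ)), hd.2 ≠ 0 → (∀ x ∈ tl, x.2.2 ≠ 0) →
      F₁.toFun (zwordProd (⇑π) (fun t => (⟨u t, h₁.u_unitary t⟩ : unitary M)) hd tl) =
      F₂.toFun (zwordProd (⇑π) (fun t => (⟨u t, h₁.u_unitary t⟩ : unitary M)) hd tl) := by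
  intro hd tl _ _
  have h1 : (1 : M) ∈ HNNAux.SSub D θ ED Eθ π u :=
    Submodule.subset_span (Or.inl ⟨1, map_one π⟩)
  have hz := HNNAux.S_mul_zword h₁ tl hd 1 h1
  rw [one_mul] at hz
  exact HNNAux.F_eq_on_S h₁ h₂ hz
end
end

section
/- Let P = (P ⋆ S) where P is a tracial von Neumann algebra and S = L(F₂) with Haar unitary generators a, b, free product taken with respect to the traces. If {u_n}_{n∈ℤ} is a family of unitaries in P, then the unitaries u_n b^n a b*^n, n ∈ ℤ, form a *-free family of Haar unitaries in the free product P ⋆ S. -/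
noncomputable section

namespace HNN

/-- Alternating words between two sets `K₁`, `K₂`, starting in `K₁` if `b = true`. -/
def Alt {L : Type*} (K₁ K₂ : Set L) : Bool → List L → Prop
  | _, [] => True
  | b, x :: xs => (x ∈ if b then K₁ else K₂) ∧ Alt K₁ K₂ (!b) xs

end HNN


set_option linter.unusedSectionVars false


namespace FH
open FreeGroup List

variable {α : Type*}

/-- no-cancellation relation -/
def nc (a b : α × Bool) : Prop := ¬(a.1 = b.1 ∧ b.2 = !a.2)

theorem chain'_of_no_decomp {L : List (α × Bool)}
    (h : ∀ (L₂ L₃ : List (α × Bool)) (x : α) (b : Bool), L ≠ L₂ ++ (x, b) :: (x, !b) :: L₃) :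
    List.Chain' nc L := by
  induction L with
  | nil => exact List.isChain_nil
  | cons a t ih =>
    cases t with
    | nil => exact List.isChain_singleton _
    | cons c t' =>
      refine List.isChain_cons_cons.2 ⟨?_, ih ?_⟩
      · rintro ⟨h1, h2⟩
        exact h [] t' a.1 a.2 (by
          have hc : c = (a.1, !a.2) := Prod.ext h1.symm h2
          rw [hc]
          exact congrArg₂ List.cons (Prod.mk.eta).symm rfl)
      · intro L₂ L₃ x b hL
        exact h (a :: L₂) L₃ x b (by rw [List.cons_append, hL])

theorem chain'_toWord [DecidableEq α] (x : FreeGroup α) : List.Chain' nc x.toWord := by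
  apply chain'_of_no_decomp
  intro L₂ L₃ y b hL
  exact FreeGroup.reduce.not (L₁ := x.toWord) (by rw [FreeGroup.reduce_toWord, hL])

theorem reduce_eq_self_of_chain' [DecidableEq α] {L : List (α × Bool)}
    (h : List.Chain' nc L) : FreeGroup.reduce L = L := by
  induction L with
  | nil => rfl
  | cons a t ih =>
    have ht := ih h.tail
    rw [FreeGroup.reduce.cons, ht]
    cases t with
    | nil => rfl
    | cons c t' =>
      have hac : nc a c := List.isChain_cons_cons.1 h |>.1
      have : ¬(a.1 = c.1 ∧ a.2 = !c.2) := by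
        rintro ⟨h1, h2⟩
        exact hac ⟨h1, by rw [h2, Bool.not_not]⟩
      simp [this]

theorem mk_ne_one_of_chain' [DecidableEq α] {L : List (α × Bool)} (hne : L ≠ [])
    (h : List.Chain' nc L) : FreeGroup.mk L ≠ 1 := by
  intro hcon
  have : (FreeGroup.mk L).toWord = [] := by rw [hcon, FreeGroup.toWord_one]
  rw [FreeGroup.toWord_mk, reduce_eq_self_of_chain' h] at this
  exact hne this


/-- the conjugated generator `b^n a b^{-n}` -/
def cf (n : ℤ) : FreeGroup (Fin 2) :=
  FreeGroup.of 1 ^ n * FreeGroup.of 0 * FreeGroup.of 1 ^ (-n)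

/-- image of a word in `F(ℤ)` under `x_n ↦ b^n a b^{-n}` -/
def gL (l : List (ℤ × Bool)) : FreeGroup (Fin 2) := FreeGroup.lift cf (FreeGroup.mk l)

theorem gL_append (s t : List (ℤ × Bool)) : gL (s ++ t) = gL s * gL t := by
  rw [gL, ← FreeGroup.mul_mk, _root_.map_mul (FreeGroup.lift cf)]; rfl

/-- letter word for `b^m` -/
def Lb (m : ℤ) : List (Fin 2 × Bool) :=
  if 0 ≤ m then List.replicate m.toNat (1, true) else List.replicate (-m).toNat (1, false)

theorem fst_of_mem_Lb {m : ℤ} {y : Fin 2 × Bool} (hy : y ∈ Lb m) : y.1 = 1 := by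
  rw [Lb] at hy
  split at hy <;> simp_all [List.eq_of_mem_replicate hy]

theorem mk_replicate (x : α) (b : Bool) (k : ℕ) :
    FreeGroup.mk (List.replicate k (x, b)) = (cond b (FreeGroup.of x) (FreeGroup.of x)⁻¹) ^ k := by
  induction k with
  | zero => rfl
  | succ k ih =>
    rw [List.replicate_succ, show ((x,b) :: List.replicate k (x,b)) =
      [(x,b)] ++ List.replicate k (x,b) from rfl, ← FreeGroup.mul_mk, ih, pow_succ']
    congr 1
    cases b
    · show FreeGroup.mk [(x, false)] = (FreeGroup.of x)⁻¹
      rw [show FreeGroup.of x = FreeGroup.mk [(x, true)] from rfl, FreeGroup.inv_mk]; rfl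
    · rfl

theorem mk_Lb (m : ℤ) : FreeGroup.mk (Lb m) = FreeGroup.of 1 ^ m := by
  rw [Lb]
  split
  · rw [mk_replicate]
    simp only [cond_true]
    rw [← zpow_natCast, Int.toNat_of_nonneg ‹_›]
  · rw [mk_replicate]
    simp only [cond_false]
    rw [inv_pow, ← zpow_natCast, Int.toNat_of_nonneg (by omega), ← zpow_neg, neg_neg]

/-- explicit word for `b^{-p} · gL l` -/
def Wrec : ℤ → List (ℤ × Bool) → List (Fin 2 × Bool)
  | p, [] => Lb (-p)
  | p, (n, e) :: l => Lb (n - p) ++ (((0 : Fin 2), e) :: Wrec n l)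

theorem mk_singleton (n : ℤ) (e : Bool) :
    gL [(n, e)] = cond e (cf n) (cf n)⁻¹ := by
  cases e
  · show FreeGroup.lift cf (FreeGroup.mk [(n, false)]) = _
    rw [show FreeGroup.mk [(n, false)] = (FreeGroup.of n)⁻¹ by
      rw [show FreeGroup.of n = FreeGroup.mk [(n, true)] from rfl, FreeGroup.inv_mk]; rfl]
    simp
  · show FreeGroup.lift cf (FreeGroup.of n) = cf n
    simp

theorem mk_Wrec (l : List (ℤ × Bool)) : ∀ p : ℤ,
    FreeGroup.mk (Wrec p l) = FreeGroup.of 1 ^ (-p) * gL l := by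
  induction l with
  | nil => intro p; rw [Wrec, mk_Lb]; simp [gL]
  | cons x l ih =>
    intro p
    obtain ⟨n, e⟩ := x
    rw [Wrec, ← FreeGroup.mul_mk, mk_Lb,
      show (((0:Fin 2), e) :: Wrec n l) = [((0:Fin 2), e)] ++ Wrec n l from rfl,
      ← FreeGroup.mul_mk, ih n,
      show gL ((n, e) :: l) = gL [(n,e)] * gL l from gL_append [(n,e)] l,
      mk_singleton]
    have hmk0 : FreeGroup.mk [((0 : Fin 2), e)] = cond e (FreeGroup.of 0) (FreeGroup.of 0)⁻¹ := by
      cases e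
      · rw [show FreeGroup.of (0 : Fin 2) = FreeGroup.mk [((0:Fin 2), true)] from rfl,
          FreeGroup.inv_mk]; rfl
      · rfl
    rw [hmk0, cf]
    cases e <;> simp [mul_assoc, zpow_add, zpow_neg] <;> group

end FH

namespace FH
open FreeGroup List

theorem chain'_Lb (m : ℤ) : List.Chain' nc (Lb m) := by
  rw [Lb]; split <;> exact List.isChain_replicate_of_rel _ (by simp [nc])

theorem Lb_eq_nil_iff {m : ℤ} : Lb m = [] ↔ m = 0 := by
  rw [Lb]; split <;> simp <;> omega

theorem head_Wrec (n : ℤ) (l : List (ℤ × Bool)) :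
    ∀ y ∈ (Wrec n l).head?, y.1 = 1 ∨ ∃ e' l', l = (n, e') :: l' ∧ y = ((0 : Fin 2), e') := by
  intro y hy
  cases l with
  | nil =>
    rw [Wrec] at hy
    exact Or.inl (fst_of_mem_Lb (List.mem_of_mem_head? hy))
  | cons x l' =>
    obtain ⟨n', e'⟩ := x
    rcases hL : Lb (n' - n) with _ | ⟨z, zs⟩
    · have hn : n' = n := by have := Lb_eq_nil_iff.1 hL; omega
      rw [Wrec, hL] at hy
      simp only [List.nil_append, List.head?_cons, Option.mem_def, Option.some.injEq] at hy
      exact Or.inr ⟨e', l', by rw [hn], hy.symm⟩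
    · rw [Wrec, hL] at hy
      simp only [List.cons_append, List.head?_cons, Option.mem_def, Option.some.injEq] at hy
      have : z ∈ Lb (n' - n) := by rw [hL]; exact List.mem_cons_self
      exact Or.inl (hy ▸ fst_of_mem_Lb this)

theorem chain'_Wrec : ∀ (l : List (ℤ × Bool)), List.Chain' nc l →
    ∀ p : ℤ, List.Chain' nc (Wrec p l) := by
  intro l
  induction l with
  | nil => intro _ p; rw [Wrec]; exact chain'_Lb _
  | cons x l ih =>
    intro hch p
    obtain ⟨n, e⟩ := x
    rw [Wrec]
    refine List.isChain_append.2 ⟨chain'_Lb _, ?_, ?_⟩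
    · refine List.isChain_cons.2 ⟨?_, ih hch.tail n⟩
      intro y hy
      rcases head_Wrec n l y hy with h1 | ⟨e', l', rfl, rfl⟩
      · exact fun hc => (by decide : ¬ ((0 : Fin 2) = 1)) (h1 ▸ hc.1)
      · have hrel : nc (n, e) (n, e') := (List.isChain_cons_cons.1 hch).1
        intro hc
        exact hrel ⟨rfl, hc.2⟩
    · intro x hx y hy
      simp only [List.head?_cons, Option.mem_def, Option.some.injEq] at hy
      have : x.1 = 1 := fst_of_mem_Lb (List.mem_of_mem_getLast? hx)
      intro hc
      have h0 : x.1 = (0 : Fin 2) := by rw [← hy] at hc; exact hc.1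
      rw [this] at h0
      exact absurd h0 (by decide)

theorem Wrec_ne_nil (p : ℤ) (x : ℤ × Bool) (l : List (ℤ × Bool)) :
    Wrec p (x :: l) ≠ [] := by
  obtain ⟨n, e⟩ := x
  rw [Wrec]
  simp

theorem gL_ne_one {l : List (ℤ × Bool)} (hne : l ≠ []) (hch : List.Chain' nc l) :
    gL l ≠ 1 := by
  obtain ⟨x, l', rfl⟩ : ∃ x l', l = x :: l' := by
    cases l with | nil => exact absurd rfl hne | cons a b => exact ⟨a, b, rfl⟩
  have := mk_Wrec (x :: l') 0
  rw [neg_zero, zpow_zero, one_mul] at this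
  rw [← this]
  exact mk_ne_one_of_chain' (Wrec_ne_nil 0 x l') (chain'_Wrec _ hch 0)

end FH

namespace FH

variable {Q : Type*} [NormedRing Q] [NormedAlgebra ℂ Q]

/-- flatten a list of pairs -/
def flat : List (Q × Q) → List Q
  | [] => []
  | q :: L => q.1 :: q.2 :: flat L

theorem flat_append (A B : List (Q × Q)) : flat (A ++ B) = flat A ++ flat B := by
  induction A with
  | nil => rfl
  | cons q A ih => simp [flat, ih]

theorem alt_flat (K₁ K₂ : Set Q) : ∀ (L : List (Q × Q)) (rest : List Q),
    (∀ q ∈ L, q.1 ∈ K₂ ∧ q.2 ∈ K₁) → HNN.Alt K₁ K₂ false rest →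
    HNN.Alt K₁ K₂ false (flat L ++ rest) := by
  intro L
  induction L with
  | nil => intro rest _ h; exact h
  | cons q L ih =>
    intro rest hmem hrest
    show HNN.Alt K₁ K₂ false (q.1 :: q.2 :: (flat L ++ rest))
    refine ⟨?_, ?_, ?_⟩
    · simpa using (hmem q (List.mem_cons_self)).1
    · simpa using (hmem q (List.mem_cons_self)).2
    · exact ih rest (fun r hr => hmem r (List.mem_cons_of_mem _ hr)) hrest

theorem prod_add_middle (L₁ L₂ : List Q) (x y : Q) :
    (L₁ ++ (x + y) :: L₂).prod = (L₁ ++ x :: L₂).prod + (L₁ ++ y :: L₂).prod := by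
  simp [List.prod_append, mul_add, add_mul]

theorem prod_smul_middle (L₁ L₂ : List Q) (c : ℂ) (x : Q) :
    (L₁ ++ (c • x) :: L₂).prod = c • (L₁ ++ x :: L₂).prod := by
  simp [List.prod_append, mul_smul_comm, smul_mul_assoc]

theorem prod_one_middle (L₁ L₂ : List Q) :
    (L₁ ++ (1 : Q) :: L₂).prod = (L₁ ++ L₂).prod := by
  simp [List.prod_append]

theorem prod_merge (L₁ L₂ : List Q) (x y : Q) :
    (L₁ ++ x :: y :: L₂).prod = (L₁ ++ (x * y) :: L₂).prod := by
  simp [List.prod_append, mul_assoc]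

/-- reduced tail structure: all contiguous merges of the `S`-letters are centered. -/
def GoodTail (R S : Set Q) (τ : Q → ℂ) : Q → List (Q × Q) → Prop
  | s, [] => s ∈ S ∧ τ s = 0
  | s, (p, s') :: r => (s ∈ S ∧ τ s = 0) ∧ p ∈ R ∧ GoodTail R S τ (s * s') r ∧ GoodTail R S τ s' r

theorem core (R S : Set Q) (τ : Q →ₗ[ℂ] ℂ) (hτ1 : τ 1 = 1)
    (hR1 : (1 : Q) ∈ R) (hRsub : ∀ x y, x ∈ R → y ∈ R → x - y ∈ R)
    (hRsmul : ∀ (c : ℂ) (x : Q), x ∈ R → c • x ∈ R)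
    (hfree : ∀ (b : Bool) (l : List Q), l ≠ [] →
      HNN.Alt {x | x ∈ R ∧ τ x = 0} {x | x ∈ S ∧ τ x = 0} b l → τ l.prod = 0) :
    ∀ (tl pref : List (Q × Q)) (s e : Q),
    (∀ q ∈ pref, (q.1 ∈ S ∧ τ q.1 = 0) ∧ (q.2 ∈ R ∧ τ q.2 = 0)) →
    GoodTail R S τ s tl →
    (e = 1 ∨ (e ∈ R ∧ τ e = 0)) →
    τ ((flat pref ++ s :: (flat tl ++ [e])).prod) = 0 := by
  intro tl
  induction tl with
  | nil =>
    intro pref s e hpref hgt he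
    obtain ⟨hsS, hsτ⟩ : s ∈ S ∧ τ s = 0 := hgt
    rcases he with rfl | ⟨heR, heτ⟩
    · rw [show flat pref ++ s :: (flat ([] : List (Q × Q)) ++ [(1 : Q)])
          = (flat pref ++ [s]) ++ (1 : Q) :: [] by simp [flat],
        prod_one_middle]
      rw [show (flat pref ++ [s]) ++ ([] : List Q) = flat pref ++ [s] by simp]
      refine hfree false _ (by simp) (alt_flat _ _ pref [s] ?_ ?_)
      · intro q hq; exact ⟨(hpref q hq).1, (hpref q hq).2⟩
      · exact ⟨by simpa using ⟨hsS, hsτ⟩, trivial⟩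
    · refine hfree false _ (by simp) ?_
      have : flat pref ++ s :: (flat ([] : List (Q × Q)) ++ [e]) = flat pref ++ [s, e] := by
        simp [flat]
      rw [this]
      refine alt_flat _ _ pref [s, e] (fun q hq => ⟨(hpref q hq).1, (hpref q hq).2⟩) ?_
      exact ⟨by simpa using ⟨hsS, hsτ⟩, by simpa using ⟨heR, heτ⟩, trivial⟩
  | cons q rest ih =>
    intro pref s e hpref hgt he
    obtain ⟨p, s'⟩ := q
    obtain ⟨⟨hsS, hsτ⟩, hpR, hmerge, htail⟩ :
        (s ∈ S ∧ τ s = 0) ∧ p ∈ R ∧ GoodTail R S τ (s * s') rest ∧ GoodTail R S τ s' rest := hgt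
    have hp : p = (p - τ p • 1) + τ p • 1 := by abel
    have hlist : flat pref ++ s :: (flat ((p, s') :: rest) ++ [e])
        = (flat pref ++ [s]) ++ p :: (s' :: (flat rest ++ [e])) := by simp [flat]
    rw [hlist]
    conv_lhs => rw [hp]
    rw [prod_add_middle, prod_smul_middle, prod_one_middle, map_add, map_smul]
    have h1 : τ (((flat pref ++ [s]) ++ (p - τ p • 1) :: s' :: (flat rest ++ [e])).prod) = 0 := by
      have : (flat pref ++ [s]) ++ (p - τ p • 1) :: s' :: (flat rest ++ [e])
          = flat (pref ++ [(s, p - τ p • 1)]) ++ s' :: (flat rest ++ [e]) := by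
        simp [flat_append, flat]
      rw [this]
      refine ih (pref ++ [(s, p - τ p • 1)]) s' e ?_ htail he
      intro r hr
      rcases List.mem_append.1 hr with hr | hr
      · exact hpref r hr
      · simp only [List.mem_singleton] at hr
        subst hr
        refine ⟨⟨hsS, hsτ⟩, hRsub _ _ hpR (hRsmul _ _ hR1), ?_⟩
        simp [hτ1]
    have h2 : τ (((flat pref ++ [s]) ++ s' :: (flat rest ++ [e])).prod) = 0 := by
      have : (flat pref ++ [s]) ++ s' :: (flat rest ++ [e])
          = flat pref ++ s :: s' :: (flat rest ++ [e]) := by simp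
      rw [this, prod_merge]
      exact ih pref (s * s') e hpref hmerge he
    rw [h1, h2]
    simp

theorem core3 (R S : Set Q) (τ : Q →ₗ[ℂ] ℂ) (hτ1 : τ 1 = 1)
    (hτtr : ∀ x y : Q, τ (x * y) = τ (y * x))
    (hR1 : (1 : Q) ∈ R) (hRmul : ∀ x y, x ∈ R → y ∈ R → x * y ∈ R)
    (hRsub : ∀ x y, x ∈ R → y ∈ R → x - y ∈ R)
    (hRsmul : ∀ (c : ℂ) (x : Q), x ∈ R → c • x ∈ R)
    (hfree : ∀ (b : Bool) (l : List Q), l ≠ [] →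
      HNN.Alt {x | x ∈ R ∧ τ x = 0} {x | x ∈ S ∧ τ x = 0} b l → τ l.prod = 0)
    (tl : List (Q × Q)) (s p₁ p₂ : Q)
    (hgt : GoodTail R S (⇑τ) s tl) (hp₁ : p₁ ∈ R) (hp₂ : p₂ ∈ R) :
    τ (p₁ * (s :: flat tl).prod * p₂) = 0 := by
  have h1 : τ (p₁ * (s :: flat tl).prod * p₂) = τ ((s :: flat tl).prod * (p₂ * p₁)) := by
    rw [hτtr (p₁ * (s :: flat tl).prod) p₂, ← mul_assoc, hτtr]
  rw [h1]
  set E := p₂ * p₁ with hE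
  have hER : E ∈ R := hRmul _ _ hp₂ hp₁
  have hsplit : (s :: flat tl).prod * E
      = τ E • ((s :: flat tl).prod * 1) + (s :: flat tl).prod * (E - τ E • 1) := by
    rw [mul_sub, mul_smul_comm, mul_one]
    abel
  rw [hsplit, map_add, map_smul]
  have key : ∀ e : Q, (e = 1 ∨ (e ∈ R ∧ τ e = 0)) → τ ((s :: flat tl).prod * e) = 0 := by
    intro e he
    have : (s :: flat tl).prod * e = ((flat ([] : List (Q × Q)) ++ s :: (flat tl ++ [e])).prod) := by
      simp [flat, List.prod_append, mul_assoc]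
    rw [this]
    exact core R S τ hτ1 hR1 hRsub hRsmul hfree tl [] s e (by simp) hgt he
  rw [key 1 (Or.inl rfl), key (E - τ E • 1) (Or.inr ⟨hRsub _ _ hER (hRsmul _ _ hR1), by
    simp [hτ1]⟩)]
  simp


variable {Q : Type*} [NormedRing Q] [StarRing Q] [NormedAlgebra ℂ Q] [StarModule ℂ Q]
open FreeGroup

section Word

variable (lam : FreeGroup (Fin 2) →* unitary Q) (u : ℤ → unitary Q)

def cg (x : ℤ × Bool) : FreeGroup (Fin 2) := cond x.2 (cf x.1) (cf x.1)⁻¹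

theorem cg_eq_gL (x : ℤ × Bool) : cg x = gL [x] := by
  obtain ⟨n, e⟩ := x; exact (mk_singleton n e).symm

def rf (x : ℤ × Bool) : Q := if x.2 then (u x.1 : Q) else 1
def qf (x : ℤ × Bool) : Q := if x.2 then 1 else star (u x.1 : Q)

def pairsQ : (ℤ × Bool) → List (ℤ × Bool) → List (Q × Q)
  | _, [] => []
  | x, y :: l => (qf u x * rf u y, (lam (cg y) : Q)) :: pairsQ y l

def Ef : (ℤ × Bool) → List (ℤ × Bool) → Q
  | x, [] => qf u x
  | _, y :: l => Ef y l

theorem Xdecomp : ∀ (l : List (ℤ × Bool)) (x : ℤ × Bool),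
    ((x :: l).map (fun z => rf u z * (lam (cg z) : Q) * qf u z)).prod
      = rf u x * ((lam (cg x) : Q) :: flat (pairsQ lam u x l)).prod * Ef u x l := by
  intro l
  induction l with
  | nil =>
    intro x
    simp [pairsQ, Ef, flat, mul_assoc]
  | cons y l ih =>
    intro x
    rw [List.map_cons, List.prod_cons, ih y]
    simp only [pairsQ, Ef, flat, List.prod_cons]
    simp [mul_assoc]

theorem Ef_mem (R : Set Q) (hqR : ∀ x : ℤ × Bool, qf u x ∈ R) :
    ∀ (l : List (ℤ × Bool)) (x : ℤ × Bool), Ef u x l ∈ R := by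
  intro l
  induction l with
  | nil => intro x; exact hqR x
  | cons y l ih => intro x; exact ih y

theorem GT (R SS : Set Q) (τ : Q → ℂ)
    (hlamS : ∀ g : FreeGroup (Fin 2), ((lam g : Q)) ∈ SS)
    (hlamτ : ∀ g : FreeGroup (Fin 2), g ≠ 1 → τ (lam g : Q) = 0)
    (hqrR : ∀ x y : ℤ × Bool, qf u x * rf u y ∈ R) :
    ∀ (l : List (ℤ × Bool)) (x : ℤ × Bool) (sacc : List (ℤ × Bool)),
    List.Chain' nc ((sacc ++ [x]) ++ l) →
    GoodTail R SS τ ((lam (gL (sacc ++ [x])) : Q)) (pairsQ lam u x l) := by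
  intro l
  induction l with
  | nil =>
    intro x sacc hch
    rw [List.append_nil] at hch
    exact ⟨hlamS _, hlamτ _ (gL_ne_one (by simp) hch)⟩
  | cons y l ih =>
    intro x sacc hch
    have hpre : List.Chain' nc (sacc ++ [x]) := (List.isChain_append.1 hch).1
    refine ⟨⟨hlamS _, hlamτ _ (gL_ne_one (by simp) hpre)⟩, hqrR x y, ?_, ?_⟩
    · have hmul : (lam (gL (sacc ++ [x])) : Q) * (lam (cg y) : Q)
          = (lam (gL ((sacc ++ [x]) ++ [y])) : Q) := by
        rw [cg_eq_gL, gL_append (sacc ++ [x]) [y], _root_.map_mul lam]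
        rfl
      rw [hmul]
      exact ih y (sacc ++ [x]) (by simpa using hch)
    · have : (lam (cg y) : Q) = (lam (gL ([] ++ [y])) : Q) := by rw [cg_eq_gL]; rfl
      rw [this]
      refine ih y [] ?_
      simp only [List.nil_append]
      have := (List.isChain_append.1 hch).2.1
      exact this

end Word

end FH

open HNN in
/-- In the tracial free product `Q = P ⋆ S`, where `S = L(F₂)` has free Haar
unitary generators `a = λ(of 0)`, `b = λ(of 1)` (freeness of the two components is expressed by
the vanishing of the trace on alternating words in the trace-kernels), for any family of
unitaries `u_n`, `n ∈ ℤ`, coming from `P`, the unitaries `u_n bⁿ a b*ⁿ`, `n ∈ ℤ`, form a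
`*`-free family of Haar unitaries in `P ⋆ S`. -/
theorem perturbed_conjugates_form_free_haar_family_in_free_product
    {Q : Type*} [NormedRing Q] [StarRing Q] [CStarRing Q] [NormedAlgebra ℂ Q] [StarModule ℂ Q]
    {P : Type*} [NormedRing P] [StarRing P] [CStarRing P] [NormedAlgebra ℂ P] [StarModule ℂ P]
    (jP : P →⋆ₐ[ℂ] Q) (hjP : Function.Injective jP)
    (lam : FreeGroup (Fin 2) →* unitary Q)
    (τ : Q →ₗ[ℂ] ℂ)
    (hτ1 : τ 1 = 1) (hτtr : ∀ x y, τ (x * y) = τ (y * x))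
    (hτpos : ∀ x, 0 ≤ (τ (star x * x)).re ∧ (τ (star x * x)).im = 0)
    (hτfaithful : ∀ x, τ (star x * x) = 0 → x = 0)
    -- `S` is generated by the `*`-free Haar unitaries `a`, `b`
    (S : StarSubalgebra ℂ Q)
    (hS : S = (StarAlgebra.adjoin ℂ
      (Set.range fun g : FreeGroup (Fin 2) => (lam g : Q))).topologicalClosure)
    (hτfreeS : ∀ g : FreeGroup (Fin 2), g ≠ 1 → τ (lam g : Q) = 0)
    -- freeness of the two components `jP(P)` and `S` with respect to `τ`
    (hfree : ∀ (b : Bool) (l : List Q), l ≠ [] →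
      Alt {x | x ∈ Set.range ⇑jP ∧ τ x = 0} {x | x ∈ S ∧ τ x = 0} b l →
      τ l.prod = 0)
    -- generation: `Q = P ⋆ S`
    (hgen : (StarAlgebra.adjoin ℂ
      (Set.range ⇑jP ∪ (S : Set Q))).topologicalClosure = ⊤)
    -- the unitaries `u_n` coming from `P`
    (u : ℤ → unitary Q) (hu : ∀ n : ℤ, ((u n : Q)) ∈ Set.range ⇑jP) :
    ∀ h : FreeGroup ℤ, h ≠ 1 →
      τ ((FreeGroup.lift (fun n : ℤ =>
        u n * (lam (FreeGroup.of 1) ^ n * lam (FreeGroup.of 0) * lam (FreeGroup.of 1) ^ (-n))) h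
          : unitary Q) : Q) = 0 := by
  intro h hne
  classical
  -- the generating function, rewritten via `cf`
  have hFeq : (fun n : ℤ => u n * (lam (FreeGroup.of 1) ^ n * lam (FreeGroup.of 0) *
      lam (FreeGroup.of 1) ^ (-n))) = fun n : ℤ => u n * lam (FH.cf n) := by
    funext n
    congr 1
    rw [FH.cf, _root_.map_mul lam, _root_.map_mul lam, map_zpow lam, map_zpow lam]
  rw [hFeq]
  set F : ℤ → unitary Q := fun n : ℤ => u n * lam (FH.cf n) with hF
  -- reduced word of h
  have hl : FreeGroup.mk h.toWord = h := FreeGroup.mk_toWord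
  have hlne : h.toWord ≠ [] := fun hc => hne (FreeGroup.toWord_eq_nil_iff.1 hc)
  have hch : List.Chain' FH.nc h.toWord := FH.chain'_toWord h
  obtain ⟨x, l', hxl⟩ : ∃ x l', h.toWord = x :: l' := by
    cases hw : h.toWord with
    | nil => exact absurd hw hlne
    | cons a b => exact ⟨a, b, rfl⟩
  rw [hxl] at hch
  -- pointwise description of the letters
  have hpt : ∀ z : ℤ × Bool, ((cond z.2 (F z.1) (F z.1)⁻¹ : unitary Q) : Q)
      = FH.rf u z * (lam (FH.cg z) : Q) * FH.qf u z := by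
    rintro ⟨n, e⟩
    cases e
    · show ((F n)⁻¹ : unitary Q) = (FH.rf u (n, false) * (lam (FH.cg (n, false)) : Q)
        * FH.qf u (n, false) : Q)
      rw [hF]
      simp only [mul_inv_rev]
      rw [show (lam (FH.cf n))⁻¹ = lam ((FH.cf n)⁻¹) from (map_inv lam _).symm,
        show (u n)⁻¹ = star (u n) from (Unitary.star_eq_inv _).symm]
      rw [Submonoid.coe_mul]
      simp [FH.rf, FH.qf, FH.cg, Unitary.coe_star]
    · show ((F n : unitary Q) : Q) = _
      rw [hF]
      rw [Submonoid.coe_mul]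
      simp [FH.rf, FH.qf, FH.cg]
  -- the coerced word
  have hw : ((FreeGroup.lift F h : unitary Q) : Q)
      = ((x :: l').map (fun z => FH.rf u z * (lam (FH.cg z) : Q) * FH.qf u z)).prod := by
    rw [← hl, hxl, FreeGroup.lift_mk, Submonoid.coe_list_prod, List.map_map]
    refine congrArg List.prod (List.map_congr_left ?_)
    intro z _
    exact hpt z
  rw [hw, FH.Xdecomp lam u l' x]
  -- sets and their properties
  set R : Set Q := Set.range ⇑jP with hR
  have hR1 : (1 : Q) ∈ R := ⟨1, map_one jP⟩
  have hRmul : ∀ a b : Q, a ∈ R → b ∈ R → a * b ∈ R := by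
    rintro _ _ ⟨a, rfl⟩ ⟨b, rfl⟩; exact ⟨a * b, map_mul jP a b⟩
  have hRsub : ∀ a b : Q, a ∈ R → b ∈ R → a - b ∈ R := by
    rintro _ _ ⟨a, rfl⟩ ⟨b, rfl⟩; exact ⟨a - b, map_sub jP a b⟩
  have hRsmul : ∀ (c : ℂ) (a : Q), a ∈ R → c • a ∈ R := by
    rintro c _ ⟨a, rfl⟩; exact ⟨c • a, map_smul jP c a⟩
  have hrR : ∀ z : ℤ × Bool, FH.rf u z ∈ R := by
    rintro ⟨n, e⟩
    cases e
    · exact hR1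
    · simpa [FH.rf] using hu n
  have hqR : ∀ z : ℤ × Bool, FH.qf u z ∈ R := by
    rintro ⟨n, e⟩
    cases e
    · obtain ⟨w, hw'⟩ := hu n
      exact ⟨star w, by rw [map_star, hw']; rfl⟩
    · exact hR1
  have hqrR : ∀ z y : ℤ × Bool, FH.qf u z * FH.rf u y ∈ R :=
    fun z y => hRmul _ _ (hqR z) (hrR y)
  set SS : Set Q := (S : Set Q) with hSS
  have hlamS : ∀ g : FreeGroup (Fin 2), ((lam g : Q)) ∈ SS := by
    intro g
    show (lam g : Q) ∈ S
    rw [hS]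
    exact StarSubalgebra.le_topologicalClosure _
      (StarAlgebra.subset_adjoin ℂ _ ⟨g, rfl⟩)
  -- the GoodTail structure of the word
  have hgt : FH.GoodTail R SS (⇑τ) ((lam (FH.cg x) : Q)) (FH.pairsQ lam u x l') := by
    have := FH.GT lam u R SS (⇑τ) hlamS hτfreeS hqrR l' x [] (by simpa using hch)
    have hcg : (lam (FH.cg x) : Q) = (lam (FH.gL ([] ++ [x])) : Q) := by
      rw [FH.cg_eq_gL]; rfl
    rw [hcg]
    exact this
  -- conclude with the core vanishing lemma
  exact FH.core3 R SS τ hτ1 hτtr hR1 hRmul hRsub hRsmul hfree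
    (FH.pairsQ lam u x l') (lam (FH.cg x)) (FH.rf u x) (FH.Ef u x l')
    hgt (hrR x) (FH.Ef_mem u R hqR l' x)
end
end
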